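/- Let H = (V,E) be a finite simple graph with leader set V_ℓ ⊆ V, |V_ℓ| = m. Then every PMI sequence of vertices of H has length at most m + |E|; in particular δ(H,V_ℓ) ≤ m + |E|. -/

import Mathlib

open Matrix

variable {V : Type*}

def MatFamily [Fintype V] (G : SimpleGraph V) : Set (Matrix V V ℝ) :=
  {M | M.IsSymm ∧ ∀ i j : V, i ≠ j → (M i j ≠ 0 ↔ G.Adj i j)}

def inputMatrix [DecidableEq V] {m : ℕ} (ℓ : Fin m → V) : Matrix V (Fin m) ℝ :=
  Matrix.of fun i j => if i = ℓ j then (1 : ℝ) else 0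

noncomputable def ctrbMatrix [Fintype V] [DecidableEq V] {m : ℕ} (M : Matrix V V ℝ)
    (H : Matrix V (Fin m) ℝ) : Matrix V (Fin (Fintype.card V) × Fin m) ℝ :=
  Matrix.of fun i p => (M ^ (p.1 : ℕ) * H) i p.2

inductive ZFDerived (G : SimpleGraph V) (S : Set V) : V → Prop
  | init {v : V} : v ∈ S → ZFDerived G S v
  | force {u v : V} : ZFDerived G S v → G.Adj v u →
      (∀ w : V, G.Adj v w → w ≠ u → ZFDerived G S w) → ZFDerived G S u

def dset (G : SimpleGraph V) (S : Set V) : Set V := {v | ZFDerived G S v}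

noncomputable def zeta (G : SimpleGraph V) (S : Set V) : ℕ := (dset G S).ncard

def IsPMI {m : ℕ} (G : SimpleGraph V) (ℓ : Fin m → V) {k : ℕ}
    (v : Fin k → V) (π : Fin k → Fin m) : Prop :=
  ∀ i : Fin k, G.edist (ℓ (π i)) (v i) ≠ ⊤ ∧
    ∀ j : Fin k, i < j → G.edist (ℓ (π i)) (v i) < G.edist (ℓ (π i)) (v j)

noncomputable def deltaPMI {m : ℕ} (G : SimpleGraph V) (ℓ : Fin m → V) : ℕ :=
  sSup {k : ℕ | ∃ (v : Fin k → V) (π : Fin k → Fin m), IsPMI G ℓ v π}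

noncomputable def gammaSSC [Fintype V] [DecidableEq V] {m : ℕ} (G : SimpleGraph V)
    (ℓ : Fin m → V) : ℕ :=
  sInf {r : ℕ | ∃ M ∈ MatFamily G, r = (ctrbMatrix M (inputMatrix ℓ)).rank}

def IsZFSBackbone (G : SimpleGraph V) (Vl : Set V) (EB : Set (Sym2 V)) : Prop :=
  EB ⊆ G.edgeSet ∧
    ∀ Gh : SimpleGraph V, Gh ≤ G → EB ⊆ Gh.edgeSet → zeta G Vl ≤ zeta Gh Vl

def IsDistBackbone {m : ℕ} (G : SimpleGraph V) (ℓ : Fin m → V) (EB : Set (Sym2 V)) : Prop :=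
  EB ⊆ G.edgeSet ∧
    ∀ Gh : SimpleGraph V, Gh ≤ G → EB ⊆ Gh.edgeSet → deltaPMI G ℓ ≤ deltaPMI Gh ℓ

lemma exists_adj_edist_lt {V : Type*} (G : SimpleGraph V) {a v : V} (hne : a ≠ v)
    (htop : G.edist a v ≠ ⊤) : ∃ u, G.Adj u v ∧ G.edist a u < G.edist a v := by
  obtain ⟨p, hp⟩ := SimpleGraph.exists_walk_of_edist_ne_top htop
  cases hpr : p.reverse with
  | nil => exact absurd rfl hne
  | @cons _ u _ h q =>
    refine ⟨u, h.symm, ?_⟩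
    have hlen : q.length + 1 = p.length := by
      have := congrArg SimpleGraph.Walk.length hpr
      simpa [SimpleGraph.Walk.length_reverse] using this.symm
    have h1 : G.edist a u ≤ q.reverse.length := SimpleGraph.edist_le _
    rw [← hp]
    refine lt_of_le_of_lt h1 ?_
    rw [SimpleGraph.Walk.length_reverse, ← hlen]
    exact_mod_cast Nat.lt_succ_self _

theorem stmt12 [Fintype V] {m : ℕ} (H : SimpleGraph V) (ℓ : Fin m → V)
    (hinj : Function.Injective ℓ) :
    (∀ (k : ℕ) (v : Fin k → V) (π : Fin k → Fin m), IsPMI H ℓ v π →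
        k ≤ m + H.edgeSet.ncard) ∧
      deltaPMI H ℓ ≤ m + H.edgeSet.ncard := by
  have key : ∀ (k : ℕ) (v : Fin k → V) (π : Fin k → Fin m), IsPMI H ℓ v π →
      k ≤ m + H.edgeSet.ncard := by
    intro k v π hpmi
    classical
    have choose : ∀ i : Fin k, v i ≠ ℓ (π i) →
        ∃ u, H.Adj u (v i) ∧ H.edist (ℓ (π i)) u < H.edist (ℓ (π i)) (v i) := by
      intro i hne
      exact exists_adj_edist_lt H (Ne.symm hne) (hpmi i).1
    let f : Fin k → (Fin m) ⊕ H.edgeSet := fun i =>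
      if h : v i = ℓ (π i) then Sum.inl (π i)
      else Sum.inr ⟨s((choose i h).choose, v i),
        H.mem_edgeSet.mpr (choose i h).choose_spec.1⟩
    have hdist : ∀ i j : Fin k, i < j →
        H.edist (ℓ (π i)) (v i) < H.edist (ℓ (π i)) (v j) := fun i j hij =>
      (hpmi i).2 j hij
    have main : ∀ i j : Fin k, i < j → f i ≠ f j := by
      intro i j hij heq
      simp only [f] at heq
      by_cases hi : v i = ℓ (π i) <;> by_cases hj : v j = ℓ (π j)
      · rw [dif_pos hi, dif_pos hj] at heq
        have heq' := Sum.inl.inj heq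
        have h0 := hdist i j hij
        rw [hi, hj, ← heq', SimpleGraph.edist_self] at h0
        exact (lt_irrefl _ (lt_of_lt_of_le h0 zero_le))
      · rw [dif_pos hi, dif_neg hj] at heq; exact absurd heq (by simp)
      · rw [dif_neg hi, dif_pos hj] at heq; exact absurd heq (by simp)
      · rw [dif_neg hi, dif_neg hj] at heq
        have heq' : s((choose i hi).choose, v i) = s((choose j hj).choose, v j) :=
          congrArg Subtype.val (Sum.inr.inj heq)
        rcases Sym2.eq_iff.mp heq' with ⟨h1, h2⟩ | ⟨h1, h2⟩
        · have h0 := hdist i j hij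
          rw [← h2] at h0
          exact lt_irrefl _ h0
        · have h0 := hdist i j hij
          have h3 := (choose i hi).choose_spec.2
          rw [← h1] at h0
          exact lt_irrefl _ (h0.trans h3)
    have finj : Function.Injective f := by
      intro i j hfij
      by_contra hne
      rcases Ne.lt_or_gt hne with hij | hij
      · exact main i j hij hfij
      · exact main j i hij hfij.symm
    have hle := Nat.card_le_card_of_injective f finj
    have hfin : H.edgeSet.Finite := Set.toFinite _
    rw [Nat.card_eq_fintype_card, Fintype.card_fin, Nat.card_sum,
      Nat.card_eq_fintype_card, Fintype.card_fin, Nat.card_coe_set_eq] at hle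
    exact hle
  refine ⟨key, ?_⟩
  apply csSup_le
  · exact ⟨0, Fin.elim0, Fin.elim0, fun i => i.elim0⟩
  · rintro k ⟨v, π, h⟩
    exact key k v π h
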